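/- arXiv:1211.7264 — 2 statements merged into one kernel-verified Lean document; each statement's English description precedes it below -/
import Mathlib

section
/- If J is a strongly stable monomial ideal and x^γ is a monomial in J, then there exists a unique decomposition x^γ = x^α · x^η where x^α belongs to the minimal monomial basis B_J of J and min(x^α) ≥ max(x^η) (where min and max denote the smallest and largest variable appearing in a monomial). -/
open MvPolynomial

namespace Paper

/-- Monomials (exponent vectors) in `N` variables. -/
abbrev Mon (N : ℕ) := Fin N →₀ ℕ

variable {N : ℕ}

/-- Total degree of a monomial. -/
def mdeg (u : Mon N) : ℕ := u.sum fun _ e => e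

/-- `BorelStep a b` : `b` is obtained from `a` by one increasing elementary move,
i.e. `x^a · x_j = x^b · x_i` with `i < j`. -/
def BorelStep (a b : Mon N) : Prop :=
  ∃ i j : Fin N, i < j ∧ a + Finsupp.single j 1 = b + Finsupp.single i 1

/-- `BorelLt a b` : `a <_B b`, i.e. `b` is obtained from `a` by a nonempty
sequence of increasing elementary moves. -/
def BorelLt (a b : Mon N) : Prop := Relation.TransGen BorelStep a b

/-- A (combinatorially encoded) monomial ideal: a set of monomials closed
under multiplication by monomials. -/
def MonIdeal (J : Set (Mon N)) : Prop := ∀ u ∈ J, ∀ d : Mon N, u + d ∈ J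

/-- A strongly stable monomial ideal. -/
def StronglyStable (J : Set (Mon N)) : Prop :=
  MonIdeal J ∧ ∀ b ∈ J, ∀ a, BorelLt b a → a ∈ J

/-- The minimal monomial basis `B_J` of a monomial ideal. -/
def MinBasis (J : Set (Mon N)) : Set (Mon N) :=
  {u | u ∈ J ∧ ∀ v ∈ J, v ≤ u → v = u}

/-- `min(x^a) ≥ max(x^h)`. -/
def StarCond (a h : Mon N) : Prop :=
  ∀ i j : Fin N, a i ≠ 0 → h j ≠ 0 → j ≤ i


lemma mdeg_add (a b : Mon N) : mdeg (a + b) = mdeg a + mdeg b :=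
  Finsupp.sum_add_index' (fun _ => rfl) (fun _ _ _ => rfl)

lemma mdeg_single (m : Fin N) : mdeg (Finsupp.single m 1) = 1 :=
  Finsupp.sum_single_index rfl

lemma exists_decomp {J : Set (Mon N)} (hJ : StronglyStable J) :
    ∀ n (γ : Mon N), mdeg γ = n → γ ∈ J →
      ∃ α η : Mon N, α ∈ MinBasis J ∧ γ = α + η ∧ StarCond α η := by
  intro n
  induction n using Nat.strong_induction_on with
  | _ n ih =>
    intro γ hdeg hγ
    by_cases hmin : γ ∈ MinBasis J
    · exact ⟨γ, 0, hmin, by simp, fun i j _ hj => absurd rfl hj⟩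
    · have hne : ¬ (∀ v ∈ J, v ≤ γ → v = γ) := fun h => hmin ⟨hγ, h⟩
      push_neg at hne
      obtain ⟨v, hv, hvle, hvne⟩ := hne
      have hvle' : ∀ i, v i ≤ γ i := fun i => Finsupp.le_def.mp hvle i
      obtain ⟨k, hk⟩ : ∃ k, v k < γ k := by
        by_contra h
        push_neg at h
        exact hvne (Finsupp.ext fun i => le_antisymm (hvle' i) (h i))
      have hkmem : k ∈ γ.support := Finsupp.mem_support_iff.mpr (by omega)
      set m := γ.support.min' ⟨k, hkmem⟩ with hm
      have hmmem : γ m ≠ 0 := Finsupp.mem_support_iff.mp (γ.support.min'_mem _)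
      have hmmin : ∀ i, γ i ≠ 0 → m ≤ i := fun i hi =>
        Finset.min'_le _ i (Finsupp.mem_support_iff.mpr hi)
      have hmk : m ≤ k := hmmin k (by omega)
      have hsk : Finsupp.single k 1 ≤ γ := Finsupp.single_le_iff.mpr (by omega)
      have hsm : Finsupp.single m 1 ≤ γ := Finsupp.single_le_iff.mpr (by omega)
      -- γ - e_k ∈ J
      have hJk : γ - Finsupp.single k 1 ∈ J := by
        have heq : v + (γ - Finsupp.single k 1 - v) = γ - Finsupp.single k 1 := by
          ext i
          have h1 := hvle' i
          rcases eq_or_ne i k with rfl | h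
          · simp only [Finsupp.add_apply, Finsupp.tsub_apply, Finsupp.single_eq_same]
            omega
          · simp only [Finsupp.add_apply, Finsupp.tsub_apply,
              Finsupp.single_eq_of_ne' (Ne.symm h)]
            omega
        exact heq ▸ hJ.1 v hv _
      -- γ - e_m ∈ J
      have hJm : γ - Finsupp.single m 1 ∈ J := by
        rcases eq_or_lt_of_le hmk with heq | hlt
        · rw [heq]; exact hJk
        · have hstep : BorelStep (γ - Finsupp.single k 1) (γ - Finsupp.single m 1) :=
            ⟨m, k, hlt, by rw [tsub_add_cancel_of_le hsk, tsub_add_cancel_of_le hsm]⟩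
          exact hJ.2 _ hJk _ (Relation.TransGen.single hstep)
      have hsplit : γ = (γ - Finsupp.single m 1) + Finsupp.single m 1 :=
        (tsub_add_cancel_of_le hsm).symm
      have hdeg' : mdeg (γ - Finsupp.single m 1) < n := by
        have := mdeg_add (γ - Finsupp.single m 1) (Finsupp.single m 1)
        rw [← hsplit, mdeg_single] at this
        omega
      obtain ⟨α, η', hαB, hdec, hstar⟩ := ih _ hdeg' _ rfl hJm
      refine ⟨α, η' + Finsupp.single m 1, hαB, ?_, ?_⟩
      · rw [hsplit, hdec, add_assoc]
      · intro i j hi hj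
        rcases eq_or_ne (η' j) 0 with h0 | h0
        · have hjm : j = m := by
            by_contra hne
            simp [Finsupp.single_eq_of_ne' (Ne.symm hne), h0] at hj
          rw [hjm]
          refine hmmin i ?_
          have h1 := DFunLike.congr_fun hdec i
          simp only [Finsupp.tsub_apply, Finsupp.add_apply] at h1
          omega
        · exact hstar i j hi h0

lemma decomp_le {γ α η α' η' : Mon N} {m m' : Fin N}
    (h1 : γ = α + η) (h2 : γ = α' + η') (s1 : StarCond α η)
    (hm : α m ≠ 0) (hm'min : ∀ i, α' i ≠ 0 → m' ≤ i)
    (hle : m ≤ m') (hval : α' m' ≤ α m') : α' ≤ α := by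
  rw [Finsupp.le_def]
  intro i
  rcases lt_trichotomy i m' with hlt | rfl | hgt
  · by_cases h : α' i = 0
    · omega
    · exact absurd (hm'min i h) (not_le.mpr hlt)
  · exact hval
  · have him : m < i := lt_of_le_of_lt hle hgt
    have hη : η i = 0 := by
      by_contra h
      exact absurd (s1 m i hm h) (not_le.mpr him)
    have hγi : γ i = α i := by rw [h1]; simp [hη]
    have : α' i ≤ γ i := by rw [h2]; simp
    omega

/-- if `J` is strongly stable and `x^γ ∈ J`, there is a unique
decomposition `x^γ = x^α · x^η` with `x^α ∈ B_J` and `min(x^α) ≥ max(x^η)`. -/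
theorem star_decomposition_existsUnique {N : ℕ} {J : Set (Mon N)}
    (hJ : StronglyStable J) {γ : Mon N} (hγ : γ ∈ J) :
    ∃! p : Mon N × Mon N,
      p.1 ∈ MinBasis J ∧ γ = p.1 + p.2 ∧ StarCond p.1 p.2 := by
  obtain ⟨α, η, hαB, hdec, hstar⟩ := exists_decomp hJ (mdeg γ) γ rfl hγ
  refine ⟨(α, η), ⟨hαB, hdec, hstar⟩, ?_⟩
  rintro ⟨α', η'⟩ ⟨hαB', hdec', hstar'⟩
  dsimp only at hαB' hdec' hstar' ⊢
  have hαα : α' = α := by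
    by_cases h0 : α = 0
    · have := hαB'.2 0 (by rw [← h0]; exact hαB.1) zero_le
      rw [← this, h0]
    by_cases h0' : α' = 0
    · have := hαB.2 0 (by rw [← h0']; exact hαB'.1) zero_le
      rw [h0', this]
    have hne : α.support.Nonempty := Finsupp.support_nonempty_iff.mpr h0
    have hne' : α'.support.Nonempty := Finsupp.support_nonempty_iff.mpr h0'
    set m := α.support.min' hne with hmdef
    set m' := α'.support.min' hne' with hm'def
    have hm : α m ≠ 0 := Finsupp.mem_support_iff.mp (α.support.min'_mem _)
    have hm' : α' m' ≠ 0 := Finsupp.mem_support_iff.mp (α'.support.min'_mem _)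
    have hmmin : ∀ i, α i ≠ 0 → m ≤ i := fun i hi =>
      Finset.min'_le _ i (Finsupp.mem_support_iff.mpr hi)
    have hm'min : ∀ i, α' i ≠ 0 → m' ≤ i := fun i hi =>
      Finset.min'_le _ i (Finsupp.mem_support_iff.mpr hi)
    rcases lt_trichotomy m m' with hlt | heq | hgt
    · -- α' ≤ α ; need hval : α' m' ≤ α m'
      have hη : η m' = 0 := by
        by_contra h
        exact absurd (hstar m m' hm h) (not_le.mpr hlt)
      have hval : α' m' ≤ α m' := by
        have h1 : α' m' ≤ γ m' := by rw [hdec']; simp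
        have h2 : γ m' = α m' := by rw [hdec]; simp [hη]
        omega
      exact hαB.2 α' hαB'.1 (decomp_le hdec hdec' hstar hm hm'min (le_of_lt hlt) hval)
    · rcases le_total (α' m') (α m') with hval | hval
      · exact hαB.2 α' hαB'.1 (decomp_le hdec hdec' hstar hm hm'min (le_of_eq heq) hval)
      · exact (hαB'.2 α hαB.1
          (decomp_le hdec' hdec hstar' hm' hmmin (le_of_eq heq.symm) (heq ▸ hval))).symm
    · have hη : η' m = 0 := by
        by_contra h
        exact absurd (hstar' m' m hm' h) (not_le.mpr hgt)
      have hval : α m ≤ α' m := by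
        have h1 : α m ≤ γ m := by rw [hdec]; simp
        have h2 : γ m = α' m := by rw [hdec']; simp [hη]
        omega
      exact (hαB'.2 α hαB.1
        (decomp_le hdec' hdec hstar' hm' hmmin (le_of_lt hgt) hval)).symm
  subst hαα
  have hηη : η' = η := by
    have heq : α' + η = α' + η' := hdec ▸ hdec'
    ext i
    have := DFunLike.congr_fun heq i
    simp only [Finsupp.add_apply] at this
    omega
  rw [hηη]


end Paper
end

section
/- Let 𝔧 be a strongly stable ideal in R = K[x_1,...,x_n] and 𝔊 a non-homogeneous 𝔧-marked set. Then the 𝔊_∗-reduction relation is Noetherian, and for every polynomial g in R there exists a reduced polynomial ḡ (i.e., supp(ḡ) ∩ 𝔧 = ∅) such that g reduces to ḡ by 𝔊_∗. -/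
open MvPolynomial

namespace Paper

variable {N : ℕ}

variable (K : Type) [Field K]

/-- The monomial `x^u` as a polynomial. -/
noncomputable def mono {N : ℕ} (u : Mon N) : MvPolynomial (Fin N) K :=
  MvPolynomial.monomial u (1 : K)

/-- The (actual) monomial ideal of `S` spanned by a set of monomials. -/
noncomputable def idealOf {N : ℕ} (J : Set (Mon N)) : Ideal (MvPolynomial (Fin N) K) :=
  Ideal.span (mono K '' J)

/-- The irrelevant maximal ideal `(x_0, …, x_n)`. -/
noncomputable def irrel (N : ℕ) : Ideal (MvPolynomial (Fin N) K) :=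
  Ideal.span (Set.range MvPolynomial.X)

/-- The saturation `I^sat = ⋃_j (I : (x_0,…,x_n)^j)`. -/
noncomputable def satIdeal {N : ℕ} (I : Ideal (MvPolynomial (Fin N) K)) :
    Ideal (MvPolynomial (Fin N) K) :=
  ⨆ k : ℕ, Submodule.colon I ((irrel K N ^ k : Ideal (MvPolynomial (Fin N) K)) : Set (MvPolynomial (Fin N) K))

/-- The satiety of a homogeneous ideal: the smallest `m` such that
`I_t = (I^sat)_t` for all `t ≥ m`. -/
noncomputable def satiety {N : ℕ} (I : Ideal (MvPolynomial (Fin N) K)) : ℕ :=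
  sInf {m | ∀ t, m ≤ t → ∀ p : MvPolynomial (Fin N) K,
    p.IsHomogeneous t → (p ∈ I ↔ p ∈ satIdeal K I)}

/-- The saturation of a combinatorial monomial ideal. -/
def msat {N : ℕ} (J : Set (Mon N)) : Set (Mon N) :=
  {u | ∃ k : ℕ, ∀ d : Mon N, mdeg d = k → u + d ∈ J}

/-- The satiety of a combinatorial monomial ideal. -/
noncomputable def msatiety {N : ℕ} (J : Set (Mon N)) : ℕ :=
  sInf {m | ∀ u : Mon N, m ≤ mdeg u → (u ∈ J ↔ u ∈ msat J)}

/-- A non-homogeneous `𝔧`-marked set: marked polynomials `f_α` with pairwise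
distinct head terms forming `B_𝔧` and tails supported outside `𝔧`. -/
def NHMarkedSet {N : ℕ} (𝔧 : Set (Mon N)) (f : Mon N → MvPolynomial (Fin N) K) : Prop :=
  ∀ α ∈ MinBasis 𝔧,
    MvPolynomial.coeff α (f α) = 1 ∧
    ∀ u ∈ (f α).support, u ≠ α → u ∉ 𝔧

/-- One step of the `𝔊_∗`-reduction: the monomial `x^γ = x^α ∗_𝔧 x^η` of the
support of `g` is replaced by `x^η · T(f_α)`. -/
def RStep {N : ℕ} (𝔧 : Set (Mon N)) (f : Mon N → MvPolynomial (Fin N) K)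
    (g g₁ : MvPolynomial (Fin N) K) : Prop :=
  ∃ γ α η : Mon N, γ ∈ g.support ∧ γ ∈ 𝔧 ∧ α ∈ MinBasis 𝔧 ∧ γ = α + η ∧
    StarCond α η ∧
    g₁ = g - MvPolynomial.coeff γ g • (mono K η * f α)

/-- The `𝔊_∗`-reduction relation (reflexive-transitive closure of `RStep`). -/
def Reduces {N : ℕ} (𝔧 : Set (Mon N)) (f : Mon N → MvPolynomial (Fin N) K) :
    MvPolynomial (Fin N) K → MvPolynomial (Fin N) K → Prop :=
  Relation.ReflTransGen (RStep K 𝔧 f)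

/-- `g` is reduced: `supp(g) ∩ 𝔧 = ∅`. -/
def IsReducedPoly {N : ℕ} (𝔧 : Set (Mon N)) (g : MvPolynomial (Fin N) K) : Prop :=
  ∀ u ∈ g.support, u ∉ 𝔧

/-- A `[𝔧,m]`-marked set: a n.h. `𝔧`-marked set whose tails are supported in
`N(𝔧)_{≤ max{m,|α|}}`. -/
def JmMarkedSet {N : ℕ} (𝔧 : Set (Mon N)) (m : ℕ)
    (f : Mon N → MvPolynomial (Fin N) K) : Prop :=
  ∀ α ∈ MinBasis 𝔧,
    MvPolynomial.coeff α (f α) = 1 ∧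
    ∀ u ∈ (f α).support, u ≠ α → (u ∉ 𝔧 ∧ mdeg u ≤ max m (mdeg α))

/-- The ideal `(𝔊)` generated by a marked set. -/
noncomputable def idealG {N : ℕ} (𝔧 : Set (Mon N))
    (f : Mon N → MvPolynomial (Fin N) K) : Ideal (MvPolynomial (Fin N) K) :=
  Ideal.span (f '' MinBasis 𝔧)

/-- A `[𝔧,m]`-completion of `𝔊`: marked polynomials `f_β ∈ (𝔊)` with pairwise
distinct head terms the monomials of `𝔧_{≤m} \ B_𝔧` and tails in `N(𝔧)_{≤m}`. -/
def IsCompletion {N : ℕ} (𝔧 : Set (Mon N)) (m : ℕ)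
    (f h : Mon N → MvPolynomial (Fin N) K) : Prop :=
  ∀ β : Mon N, β ∈ 𝔧 → mdeg β ≤ m → β ∉ MinBasis 𝔧 →
    h β ∈ idealG K 𝔧 f ∧
    MvPolynomial.coeff β (h β) = 1 ∧
    ∀ u ∈ (h β).support, u ≠ β → (u ∉ 𝔧 ∧ mdeg u ≤ m)

/-- `g'` is a `[𝔧,m]`-reduced form of `g` modulo `(𝔊)`. -/
def IsReducedForm {N : ℕ} (𝔧 : Set (Mon N)) (m : ℕ)
    (f : Mon N → MvPolynomial (Fin N) K)
    (g g' : MvPolynomial (Fin N) K) : Prop :=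
  (∀ u ∈ g'.support, u ∉ 𝔧 ∧ mdeg u ≤ max m g.totalDegree) ∧
  g - g' ∈ idealG K 𝔧 f

/-- `R_{≤ t}`: the `K`-subspace of polynomials of degree at most `t`. -/
noncomputable def degLE (N : ℕ) (t : ℕ) : Submodule K (MvPolynomial (Fin N) K) where
  carrier := {g | ∀ u ∈ g.support, mdeg u ≤ t}
  zero_mem' := by simp
  add_mem' := by
    intro a b ha hb u hu
    rcases Finset.mem_union.mp (MvPolynomial.support_add hu) with h | h
    · exact ha u h
    · exact hb u h
  smul_mem' := by
    intro c a ha u hu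
    exact ha u (MvPolynomial.support_smul hu)

/-- `⟨N(𝔧)_{≤t}⟩`: the `K`-span of the monomials outside `𝔧` of degree `≤ t`. -/
noncomputable def spanNLE {N : ℕ} (𝔧 : Set (Mon N)) (t : ℕ) :
    Submodule K (MvPolynomial (Fin N) K) :=
  Submodule.span K (mono K '' {u : Mon N | u ∉ 𝔧 ∧ mdeg u ≤ t})

/-- `(𝔊)_{≤t}`: the `K`-subspace of elements of `(𝔊)` of degree `≤ t`. -/
noncomputable def GleSub {N : ℕ} (𝔧 : Set (Mon N))
    (f : Mon N → MvPolynomial (Fin N) K) (t : ℕ) :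
    Submodule K (MvPolynomial (Fin N) K) :=
  (idealG K 𝔧 f).restrictScalars K ⊓ degLE K N t

/-- A `[𝔧,m]`-marked basis: a `[𝔧,m]`-marked set with
`R_{≤t} = ⟨N(𝔧)_{≤t}⟩ ⊕ (𝔊)_{≤t}` for all `t ≥ m`. -/
def JmMarkedBasis {N : ℕ} (𝔧 : Set (Mon N)) (m : ℕ)
    (f : Mon N → MvPolynomial (Fin N) K) : Prop :=
  JmMarkedSet K 𝔧 m f ∧
  ∀ t, m ≤ t →
    Disjoint (spanNLE K 𝔧 t) (GleSub K 𝔧 f t) ∧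
    spanNLE K 𝔧 t ⊔ GleSub K 𝔧 f t = degLE K N t

section Noetherian

open Finset

attribute [local instance] Classical.propDecidable

variable {N : ℕ}

/-- A weight function on monomials used to select star decompositions. -/
def Wt (u : Mon N) : ℕ := ∑ j : Fin N, (N - (j : ℕ)) * u j

lemma Wt_lt {u v : Mon N} (hle : v ≤ u) (hne : v ≠ u) : Wt v < Wt u := by
  have hpt : ∀ j, v j ≤ u j := Finsupp.le_def.mp hle
  obtain ⟨j, hj⟩ : ∃ j, v j ≠ u j := by
    by_contra h
    push_neg at h
    exact hne (Finsupp.ext h)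
  refine Finset.sum_lt_sum (fun i _ => Nat.mul_le_mul_left _ (hpt i)) ⟨j, Finset.mem_univ j, ?_⟩
  have h1 : v j < u j := lt_of_le_of_ne (hpt j) hj
  have hpos : 0 < N - (j : ℕ) := Nat.sub_pos_of_lt j.isLt
  exact mul_lt_mul_of_pos_left h1 hpos

lemma Wt_add (a b : Mon N) : Wt (a + b) = Wt a + Wt b := by
  simp [Wt, Finsupp.add_apply, mul_add, Finset.sum_add_distrib]

lemma Wt_single (k : Fin N) : Wt (Finsupp.single k 1) = N - (k : ℕ) := by
  rw [Wt]
  rw [Finset.sum_eq_single k]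
  · simp
  · intro b _ hb
    rw [Finsupp.single_apply, if_neg (fun h => hb h.symm), mul_zero]
  · intro h
    exact absurd (Finset.mem_univ k) h

/-- Existence of a star decomposition for monomials in a strongly stable ideal. -/
lemma exists_star_decomp {𝔧 : Set (Mon N)} (hss : StronglyStable 𝔧) {γ : Mon N}
    (hγ : γ ∈ 𝔧) : ∃ α η : Mon N, α ∈ MinBasis 𝔧 ∧ StarCond α η ∧ γ = α + η := by
  set S : Finset (Mon N) := (Finset.Iic γ).filter (fun v => v ∈ 𝔧) with hS
  have hγS : γ ∈ S := by
    simp only [hS, Finset.mem_filter, Finset.mem_Iic]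
    exact ⟨le_rfl, hγ⟩
  obtain ⟨α, hαS, hmin⟩ := S.exists_min_image Wt ⟨γ, hγS⟩
  have hα𝔧 : α ∈ 𝔧 := (Finset.mem_filter.mp hαS).2
  have hαγ : α ≤ γ := Finset.mem_Iic.mp (Finset.mem_filter.mp hαS).1
  refine ⟨α, γ - α, ⟨hα𝔧, ?_⟩, ?_, (add_tsub_cancel_of_le hαγ).symm⟩
  · intro v hv hvα
    by_contra hne
    have hvS : v ∈ S := Finset.mem_filter.mpr ⟨Finset.mem_Iic.mpr (hvα.trans hαγ), hv⟩
    exact absurd (hmin v hvS) (not_le.mpr (Wt_lt hvα hne))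
  · intro i j hi hj
    by_contra hji
    push_neg at hji
    -- `hji : i < j`
    have hαi : 1 ≤ α i := Nat.one_le_iff_ne_zero.mpr hi
    have hαjγ : α j < γ j := by
      rw [Finsupp.tsub_apply] at hj
      have := Finsupp.le_def.mp hαγ j
      omega
    have hsle : Finsupp.single i 1 ≤ α + Finsupp.single j 1 := by
      rw [Finsupp.single_le_iff, Finsupp.add_apply]
      exact le_trans hαi (Nat.le_add_right _ _)
    set α' : Mon N := α + Finsupp.single j 1 - Finsupp.single i 1 with hα'
    have heq : α + Finsupp.single j 1 = α' + Finsupp.single i 1 := by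
      rw [hα', tsub_add_cancel_of_le hsle]
    have hα'J : α' ∈ 𝔧 :=
      hss.2 α hα𝔧 α' (Relation.TransGen.single ⟨i, j, hji, heq⟩)
    have hα'γ : α' ≤ γ := by
      rw [Finsupp.le_def]
      intro k
      have h1 : α k ≤ γ k := Finsupp.le_def.mp hαγ k
      rw [hα', Finsupp.tsub_apply, Finsupp.add_apply, Finsupp.single_apply,
        Finsupp.single_apply]
      rcases eq_or_ne k j with rfl | hkj
      · have hik : ¬ i = k := fun h => absurd hji (by rw [h]; exact lt_irrefl k)
        rw [if_pos rfl, if_neg hik]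
        omega
      · rw [if_neg (fun h => hkj h.symm)]
        by_cases hik : i = k
        · rw [if_pos hik]
          omega
        · rw [if_neg hik]
          omega
    have hα'S : α' ∈ S := Finset.mem_filter.mpr ⟨Finset.mem_Iic.mpr hα'γ, hα'J⟩
    have hWt : Wt α + Wt (Finsupp.single j 1) = Wt α' + Wt (Finsupp.single i 1) := by
      rw [← Wt_add, ← Wt_add, heq]
    rw [Wt_single, Wt_single] at hWt
    have hij : (i : ℕ) < (j : ℕ) := hji
    have hjN : (j : ℕ) < N := j.isLt
    have : Wt α' < Wt α := by omega
    exact absurd (hmin α' hα'S) (not_le.mpr this)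

/-- The reversed-lexicographic embedding of monomials. -/
def rho (u : Mon N) : Lex (Fin N →₀ ℕ) := toLex (Finsupp.equivMapDomain Fin.revPerm u)

lemma rho_lt {a b : Mon N} {t : Fin N} (ht : a t < b t) (hgt : ∀ j, t < j → a j = b j) :
    rho a < rho b := by
  rw [rho, rho, Finsupp.Lex.lt_iff]
  refine ⟨t.rev, fun j hj => ?_, ?_⟩
  · show (Finsupp.equivMapDomain Fin.revPerm a) j = (Finsupp.equivMapDomain Fin.revPerm b) j
    rw [Finsupp.equivMapDomain_apply, Finsupp.equivMapDomain_apply, Fin.revPerm_symm,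
      Fin.revPerm_apply]
    exact hgt _ (Fin.lt_rev_iff.mpr hj)
  · show (Finsupp.equivMapDomain Fin.revPerm a) t.rev < (Finsupp.equivMapDomain Fin.revPerm b) t.rev
    rw [Finsupp.equivMapDomain_apply, Finsupp.equivMapDomain_apply, Fin.revPerm_symm,
      Fin.revPerm_apply, Fin.rev_rev]
    exact ht

/-- The key lemma: new monomials produced by a reduction step have strictly
smaller "star cofactor". -/
lemma key_lt {𝔧 : Set (Mon N)} (hmi : MonIdeal 𝔧) {u η α' η' : Mon N}
    (hu : u ∉ 𝔧) (hα' : α' ∈ 𝔧) (hsc : StarCond α' η') (heq : η + u = α' + η') :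
    rho η' < rho η := by
  have hpt : ∀ i, η i + u i = α' i + η' i := by
    intro i
    have := DFunLike.congr_fun heq i
    simpa [Finsupp.add_apply] using this
  set T : Finset (Fin N) := α'.support.filter (fun i => u i < α' i) with hT
  have hTne : T.Nonempty := by
    rw [Finset.nonempty_iff_ne_empty]
    intro hne
    have hle : α' ≤ u := by
      rw [Finsupp.le_def]
      intro i
      by_contra hlt
      push_neg at hlt
      have hi : i ∈ T := Finset.mem_filter.mpr
        ⟨Finsupp.mem_support_iff.mpr (by omega), hlt⟩
      rw [hne] at hi
      exact absurd hi (Finset.notMem_empty i)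
    have : u ∈ 𝔧 := by
      have h2 := hmi α' hα' (u - α')
      rwa [add_tsub_cancel_of_le hle] at h2
    exact hu this
  set t := T.max' hTne with htdef
  have htT : t ∈ T := T.max'_mem hTne
  have hα't : α' t ≠ 0 := Finsupp.mem_support_iff.mp (Finset.mem_filter.mp htT).1
  have hut : u t < α' t := (Finset.mem_filter.mp htT).2
  have hlt : η' t < η t := by
    have := hpt t
    omega
  refine rho_lt hlt ?_
  intro j hj
  have hη'j : η' j = 0 := by
    by_contra h
    exact absurd (hsc t j hα't h) (not_le.mpr hj)
  have hjT : j ∉ T := fun hmem => absurd (T.le_max' j hmem) (not_le.mpr hj)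
  have hαu : α' j ≤ u j := by
    by_contra h
    push_neg at h
    exact hjT (Finset.mem_filter.mpr ⟨Finsupp.mem_support_iff.mpr (by omega), h⟩)
  have := hpt j
  omega

/-- The finite set of valid star cofactors of `γ`. -/
noncomputable def Dset (𝔧 : Set (Mon N)) (γ : Mon N) : Finset (Mon N) :=
  (Finset.Iic γ).filter (fun η => ∃ α, α ∈ 𝔧 ∧ StarCond α η ∧ γ = α + η)

lemma mem_Dset {𝔧 : Set (Mon N)} {γ α η : Mon N} (hα : α ∈ 𝔧) (hsc : StarCond α η)
    (hγ : γ = α + η) : η ∈ Dset 𝔧 γ := by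
  refine Finset.mem_filter.mpr ⟨Finset.mem_Iic.mpr ?_, α, hα, hsc, hγ⟩
  rw [hγ]
  exact le_add_self

/-- The maximal star cofactor of `γ`, in the reversed lex order. -/
noncomputable def Erho (𝔧 : Set (Mon N)) (γ : Mon N) : Lex (Fin N →₀ ℕ) :=
  if h : ((Dset 𝔧 γ).image rho).Nonempty then ((Dset 𝔧 γ).image rho).max' h
  else toLex 0

lemma le_Erho {𝔧 : Set (Mon N)} {γ η : Mon N} (h : η ∈ Dset 𝔧 γ) :
    rho η ≤ Erho 𝔧 γ := by
  have hne : ((Dset 𝔧 γ).image rho).Nonempty := ⟨rho η, Finset.mem_image_of_mem _ h⟩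
  rw [Erho, dif_pos hne]
  exact Finset.le_max' _ _ (Finset.mem_image_of_mem _ h)

lemma Erho_lt {𝔧 : Set (Mon N)} {γ : Mon N} (hne : (Dset 𝔧 γ).Nonempty)
    {c : Lex (Fin N →₀ ℕ)} (h : ∀ η ∈ Dset 𝔧 γ, rho η < c) : Erho 𝔧 γ < c := by
  have hne' : ((Dset 𝔧 γ).image rho).Nonempty := hne.image rho
  rw [Erho, dif_pos hne']
  rw [Finset.max'_lt_iff]
  intro y hy
  obtain ⟨η, hη, rfl⟩ := Finset.mem_image.mp hy
  exact h η hη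

variable (K : Type) [Field K]

/-- The termination measure of a polynomial: the multiset (as a counting
function) of maximal star cofactors of its support monomials lying in `𝔧`. -/
noncomputable def Meas {N : ℕ} (𝔧 : Set (Mon N)) (g : MvPolynomial (Fin N) K) :
    Lex (Fin N →₀ ℕ) →₀ ℕ :=
  ∑ γ ∈ g.support.filter (fun γ => γ ∈ 𝔧), Finsupp.single (Erho 𝔧 γ) 1

lemma Meas_apply {N : ℕ} (𝔧 : Set (Mon N)) (g : MvPolynomial (Fin N) K)
    (x : Lex (Fin N →₀ ℕ)) :
    Meas K 𝔧 g x =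
      ((g.support.filter (fun γ => γ ∈ 𝔧)).filter (fun γ => Erho 𝔧 γ = x)).card := by
  rw [Meas, Finsupp.finset_sum_apply, Finset.card_filter]
  exact Finset.sum_congr rfl fun γ _ => Finsupp.single_apply

lemma step_decreases {N : ℕ} {𝔧 : Set (Mon N)} {f : Mon N → MvPolynomial (Fin N) K}
    (hss : StronglyStable 𝔧) (hms : NHMarkedSet K 𝔧 f)
    {g g₁ : MvPolynomial (Fin N) K} (hstep : RStep K 𝔧 f g g₁) :
    Finsupp.Lex (· > ·) (· < ·) (Meas K 𝔧 g₁) (Meas K 𝔧 g) := by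
  obtain ⟨γ, α, η, hγsupp, hγJ, hαB, hγeq, hsc, h₁⟩ := hstep
  -- the coefficient of γ vanishes in g₁
  have hmono : MvPolynomial.coeff γ (mono K η * f α) = 1 := by
    have hγ' : γ = η + α := by rw [hγeq, add_comm]
    rw [hγ', mono, MvPolynomial.coeff_monomial_mul, (hms α hαB).1, mul_one]
  have hcoeffγ : MvPolynomial.coeff γ g₁ = 0 := by
    rw [h₁, MvPolynomial.coeff_sub, MvPolynomial.coeff_smul, hmono]
    simp
  have hγnot : γ ∉ g₁.support := by
    rw [MvPolynomial.mem_support_iff]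
    simp [hcoeffγ]
  -- classification of new support monomials
  have hnew : ∀ δ ∈ g₁.support, δ ∉ g.support →
      ∃ u, u ∈ (f α).support ∧ u ≠ α ∧ δ = η + u := by
    intro δ hδ₁ hδg
    have hδsub : δ ∈ g.support ∪ (MvPolynomial.coeff γ g • (mono K η * f α)).support := by
      apply MvPolynomial.support_sub (Fin N) _ _
      rw [← h₁]
      exact hδ₁
    have hδm : δ ∈ (mono K η * f α).support := by
      rcases Finset.mem_union.mp hδsub with h | h
      · exact absurd h hδg
      · exact MvPolynomial.support_smul h
    have hδc : MvPolynomial.coeff δ (mono K η * f α) ≠ 0 :=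
      MvPolynomial.mem_support_iff.mp hδm
    rw [mono, MvPolynomial.coeff_monomial_mul'] at hδc
    by_cases hle : η ≤ δ
    · rw [if_pos hle, one_mul] at hδc
      refine ⟨δ - η, MvPolynomial.mem_support_iff.mpr hδc, ?_, (add_tsub_cancel_of_le hle).symm⟩
      intro hcontra
      apply hδg
      have : δ = γ := by
        rw [← add_tsub_cancel_of_le hle, hcontra, hγeq, add_comm]
      rw [this]
      exact hγsupp
    · rw [if_neg hle] at hδc
      exact absurd rfl hδc
  have hηD : η ∈ Dset 𝔧 γ := mem_Dset hαB.1 hsc hγeq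
  have hηE : rho η ≤ Erho 𝔧 γ := le_Erho hηD
  -- classification for the measure
  have hclass : ∀ δ ∈ g₁.support.filter (fun v => v ∈ 𝔧),
      δ ∈ g.support.filter (fun v => v ∈ 𝔧) ∨ Erho 𝔧 δ < rho η := by
    intro δ hδ
    obtain ⟨hδ₁, hδJ⟩ := Finset.mem_filter.mp hδ
    by_cases hδg : δ ∈ g.support
    · exact Or.inl (Finset.mem_filter.mpr ⟨hδg, hδJ⟩)
    · right
      obtain ⟨u, husupp, hune, hδeq⟩ := hnew δ hδ₁ hδg
      have huJ : u ∉ 𝔧 := (hms α hαB).2 u husupp hune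
      have hDne : (Dset 𝔧 δ).Nonempty := by
        obtain ⟨a, e, h1, h2, h3⟩ := exists_star_decomp hss hδJ
        exact ⟨e, mem_Dset h1.1 h2 h3⟩
      apply Erho_lt hDne
      intro η' hη'
      obtain ⟨-, α'', hα''J, hsc'', heq''⟩ := Finset.mem_filter.mp hη'
      exact key_lt hss.1 huJ hα''J hsc'' (by rw [← hδeq, heq''])
  -- counting
  have hcount : ∀ x, rho η ≤ x →
      (g₁.support.filter (fun v => v ∈ 𝔧)).filter (fun v => Erho 𝔧 v = x) ⊆
      ((g.support.filter (fun v => v ∈ 𝔧)).filter (fun v => Erho 𝔧 v = x)).erase γ := by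
    intro x hx δ hδ
    obtain ⟨hδA₁, hδE⟩ := Finset.mem_filter.mp hδ
    have hδA : δ ∈ g.support.filter (fun v => v ∈ 𝔧) := by
      rcases hclass δ hδA₁ with h | h
      · exact h
      · rw [hδE] at h
        exact absurd hx (not_le.mpr h)
    refine Finset.mem_erase.mpr ⟨?_, Finset.mem_filter.mpr ⟨hδA, hδE⟩⟩
    intro hcontra
    apply hγnot
    rw [← hcontra]
    exact (Finset.mem_filter.mp hδA₁).1
  have hle_cnt : ∀ x, rho η ≤ x → Meas K 𝔧 g₁ x ≤ Meas K 𝔧 g x := by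
    intro x hx
    rw [Meas_apply, Meas_apply]
    exact le_trans (Finset.card_le_card (hcount x hx))
      (Finset.card_le_card (Finset.erase_subset _ _))
  have hγmem : γ ∈ (g.support.filter (fun v => v ∈ 𝔧)).filter
      (fun v => Erho 𝔧 v = Erho 𝔧 γ) :=
    Finset.mem_filter.mpr ⟨Finset.mem_filter.mpr ⟨hγsupp, hγJ⟩, rfl⟩
  have hstrict : Meas K 𝔧 g₁ (Erho 𝔧 γ) < Meas K 𝔧 g (Erho 𝔧 γ) := by
    rw [Meas_apply, Meas_apply]
    exact lt_of_le_of_lt (Finset.card_le_card (hcount _ hηE))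
      (Finset.card_erase_lt_of_mem hγmem)
  -- the largest differing index
  set Δ : Finset (Lex (Fin N →₀ ℕ)) :=
    ((Meas K 𝔧 g₁).support ∪ (Meas K 𝔧 g).support).filter
      (fun x => Meas K 𝔧 g₁ x ≠ Meas K 𝔧 g x) with hΔ
  have hEΔ : Erho 𝔧 γ ∈ Δ := by
    refine Finset.mem_filter.mpr ⟨Finset.mem_union.mpr (Or.inr ?_), ne_of_lt hstrict⟩
    rw [Finsupp.mem_support_iff]
    omega
  have hΔne : Δ.Nonempty := ⟨_, hEΔ⟩
  refine ⟨Δ.max' hΔne, ?_, ?_⟩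
  · intro d hd
    by_contra hne
    have hdsup : d ∈ (Meas K 𝔧 g₁).support ∪ (Meas K 𝔧 g).support := by
      rcases eq_or_ne (Meas K 𝔧 g₁ d) 0 with h0 | h0
      · refine Finset.mem_union.mpr (Or.inr (Finsupp.mem_support_iff.mpr ?_))
        rw [← h0]
        exact fun h => hne h.symm
      · exact Finset.mem_union.mpr (Or.inl (Finsupp.mem_support_iff.mpr h0))
    have : d ∈ Δ := Finset.mem_filter.mpr ⟨hdsup, hne⟩
    exact absurd (Δ.le_max' d this) (not_le.mpr hd)
  · have hiΔ := Δ.max'_mem hΔne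
    have hi_ne : Meas K 𝔧 g₁ (Δ.max' hΔne) ≠ Meas K 𝔧 g (Δ.max' hΔne) :=
      (Finset.mem_filter.mp hiΔ).2
    have hge : rho η ≤ Δ.max' hΔne := le_trans hηE (Δ.le_max' _ hEΔ)
    exact lt_of_le_of_ne (hle_cnt _ hge) hi_ne

lemma wf_flip {N : ℕ} {𝔧 : Set (Mon N)} {f : Mon N → MvPolynomial (Fin N) K}
    (hss : StronglyStable 𝔧) (hms : NHMarkedSet K 𝔧 f) :
    WellFounded (fun a b => RStep K 𝔧 f b a) := by
  have hwf : WellFounded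
      (Finsupp.Lex ((· > ·) : Lex (Fin N →₀ ℕ) → Lex (Fin N →₀ ℕ) → Prop)
        ((· < ·) : ℕ → ℕ → Prop)) := by
    refine Finsupp.Lex.wellFounded' (fun n h => Nat.not_lt_zero n h) wellFounded_lt ?_
    exact (Finsupp.Lex.wellFoundedLT).wf
  exact Subrelation.wf (fun {a b} h => step_decreases K hss hms h)
    (InvImage.wf (Meas K 𝔧) hwf)

lemma no_infinite_chain {A : Type*} {r : A → A → Prop}
    (wf : WellFounded (fun a b => r b a)) (s : ℕ → A) (h : ∀ i, r (s i) (s (i + 1))) :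
    False := by
  have H : ∀ a, Acc (fun a b => r b a) a → ∀ i, s i = a → False := by
    intro a ha
    induction ha with
    | intro a _ ih =>
      intro i hi
      exact ih (s (i + 1)) (hi ▸ h i) (i + 1) rfl
  exact H (s 0) (wf.apply _) 0 rfl

end Noetherian

/-- for a n.h. `𝔧`-marked set `𝔊`, the `𝔊_∗`-reduction is
Noetherian (no infinite chains of reduction steps) and every polynomial
reduces to a reduced polynomial. -/
theorem reduction_noetherian {n : ℕ} (K : Type) [Field K]
    (𝔧 : Set (Mon n)) (f : Mon n → MvPolynomial (Fin n) K)
    (hss : StronglyStable 𝔧) (hms : NHMarkedSet K 𝔧 f) :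
    (∀ s : ℕ → MvPolynomial (Fin n) K, ¬ ∀ i, RStep K 𝔧 f (s i) (s (i + 1))) ∧
    (∀ g : MvPolynomial (Fin n) K,
      ∃ g' : MvPolynomial (Fin n) K, Reduces K 𝔧 f g g' ∧ IsReducedPoly K 𝔧 g') := by
  constructor
  · intro s hchain
    exact no_infinite_chain (wf_flip K hss hms) s hchain
  · intro g
    refine (wf_flip K hss hms).induction
      (C := fun g => ∃ g', Reduces K 𝔧 f g g' ∧ IsReducedPoly K 𝔧 g') g ?_
    intro g ih
    by_cases hred : IsReducedPoly K 𝔧 g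
    · exact ⟨g, Relation.ReflTransGen.refl, hred⟩
    · rw [IsReducedPoly] at hred
      push_neg at hred
      obtain ⟨γ, hγsupp, hγJ⟩ := hred
      obtain ⟨α, η, hαB, hsc, hγeq⟩ := exists_star_decomp hss hγJ
      have hstep : RStep K 𝔧 f g (g - MvPolynomial.coeff γ g • (mono K η * f α)) :=
        ⟨γ, α, η, hγsupp, hγJ, hαB, hγeq, hsc, rfl⟩
      obtain ⟨g', hg', hg'red⟩ := ih _ hstep
      exact ⟨g', Relation.ReflTransGen.head hstep hg', hg'red⟩


end Paper
end
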